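/- Let G = (V, E) be a simple graph with vertices v₁, …, v_n, and for each i define the n-qubit Pauli string o_i by: the j-th entry of o_i is Z if j = i; X if j > i and {v_i, v_j} ∉ E; and I otherwise. Then a subset S ⊆ {1, …, n} indexes a family {o_i : i ∈ S} of pairwise commuting Pauli strings if and only if {v_i : i ∈ S} is a clique of G; consequently, the minimum number of parts in a partition of {o_1, …, o_n} into pairwise-commuting families equals the clique cover number of G. -/

import Mathlib

open Matrix Finset

inductive Pauli : Type
  | I | X | Y | Z
  deriving DecidableEq

instance instFintypePauli : Fintype Pauli :=
  ⟨{Pauli.I, Pauli.X, Pauli.Y, Pauli.Z}, fun x => by cases x <;> simp⟩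

noncomputable def Pauli.mat : Pauli → Matrix (Fin 2) (Fin 2) ℂ
  | .I => 1
  | .X => !![0, 1; 1, 0]
  | .Y => !![0, -Complex.I; Complex.I, 0]
  | .Z => !![1, 0; 0, -1]

/-- An `N`-qubit Pauli string: a function from qubit indices to single-qubit Paulis. -/
abbrev PauliString (N : ℕ) := Fin N → Pauli

/-- The `2^N × 2^N` matrix of a Pauli string, as the tensor (Kronecker) product of its
entries, with rows/columns indexed by `Fin N → Fin 2`. -/
noncomputable def Pmat {N : ℕ} (A : PauliString N) :
    Matrix (Fin N → Fin 2) (Fin N → Fin 2) ℂ :=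
  Matrix.of fun x y => ∏ j, (A j).mat (x j) (y j)

/-- The Pauli string `o_i` associated with vertex `v_i` of a graph `G` in the reduction
from MIN-CLIQUE-COVER: `Z` at index `i`, `X` at each index `j > i` with `{v_i, v_j} ∉ E`,
and `I` elsewhere. -/
def oStr {n : ℕ} (G : SimpleGraph (Fin n)) [DecidableRel G.Adj] (i : Fin n) :
    PauliString n := fun j =>
  if j = i then Pauli.Z
  else if i < j ∧ ¬ G.Adj i j then Pauli.X
  else Pauli.I

/-- The minimum number of parts in a partition of the finite set `T` of Pauli strings into
(nonempty) families of pairwise commuting strings. -/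
noncomputable def minCommParts {N : ℕ} (T : Finset (PauliString N)) : ℕ :=
  sInf {k | ∃ P : Finset (Finset (PauliString N)), P.card = k ∧
    (∀ S ∈ P, S.Nonempty) ∧
    (P : Set (Finset (PauliString N))).PairwiseDisjoint id ∧
    P.sup id = T ∧
    ∀ S ∈ P, ∀ A ∈ S, ∀ B ∈ S, Pmat A * Pmat B = Pmat B * Pmat A}

/-- The clique cover number of a graph on `Fin n`: the minimum number of (nonempty)
cliques needed to partition the vertex set. -/
noncomputable def cliqueCoverNum {n : ℕ} (G : SimpleGraph (Fin n)) : ℕ :=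
  sInf {k | ∃ P : Finset (Finset (Fin n)), P.card = k ∧
    (∀ S ∈ P, S.Nonempty) ∧
    (P : Set (Finset (Fin n))).PairwiseDisjoint id ∧
    P.sup id = Finset.univ ∧
    ∀ S ∈ P, G.IsClique (S : Set (Fin n))}

lemma Pauli.mat_mul_self (p : Pauli) : p.mat * p.mat = 1 := by
  cases p <;> norm_num [Pauli.mat, Matrix.mul_fin_two, ← Matrix.one_fin_two, Complex.I_mul_I]
lemma Pauli.isUnit_mat (p : Pauli) : IsUnit p.mat :=
  ⟨⟨p.mat, p.mat, p.mat_mul_self, p.mat_mul_self⟩, rfl⟩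
lemma Pauli.exists_entry_ne (p q : Pauli) : ∃ a b, (p.mat * q.mat) a b ≠ 0 := by
  by_contra h
  push_neg at h
  have hz : p.mat * q.mat = 0 := by ext a b; exact h a b
  exact not_isUnit_zero (hz ▸ (p.isUnit_mat.mul q.isUnit_mat))
lemma Pmat_mul {N : ℕ} (A B : PauliString N) :
    Pmat A * Pmat B = Matrix.of fun x y => ∏ j, ((A j).mat * (B j).mat) (x j) (y j) := by
  ext x y
  simp only [Matrix.mul_apply, Pmat, Matrix.of_apply]
  rw [Finset.prod_univ_sum (fun _ => (univ : Finset (Fin 2)))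
        (fun i t => (A i).mat (x i) t * (B i).mat t (y i))]
  rw [Fintype.piFinset_univ]
  exact Finset.sum_congr rfl fun z _ => (Finset.prod_mul_distrib).symm
lemma Pmat_mul_ne_zero {N : ℕ} (A B : PauliString N) : Pmat A * Pmat B ≠ 0 := by
  rw [Pmat_mul]
  intro h
  choose a b hab using fun j => (A j).exists_entry_ne (B j)
  have h2 : (∏ j, ((A j).mat * (B j).mat) (a j) (b j)) = 0 := by
    have := congrFun (congrFun h a) b
    simpa using this
  exact Finset.prod_ne_zero_iff.mpr (fun j _ => hab j) h2
lemma Pmat_comm_of {N : ℕ} (A B : PauliString N)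
    (h : ∀ j, (A j).mat * (B j).mat = (B j).mat * (A j).mat) :
    Pmat A * Pmat B = Pmat B * Pmat A := by
  rw [Pmat_mul, Pmat_mul]
  ext x y
  simp only [Matrix.of_apply]
  exact Finset.prod_congr rfl fun j _ => by rw [h j]
lemma Pmat_smul_of {N : ℕ} (A B : PauliString N) (c : Fin N → ℂ)
    (h : ∀ j, (A j).mat * (B j).mat = c j • ((B j).mat * (A j).mat)) :
    Pmat A * Pmat B = (∏ j, c j) • (Pmat B * Pmat A) := by
  rw [Pmat_mul, Pmat_mul]
  ext x y
  simp only [Matrix.smul_apply, Matrix.of_apply, smul_eq_mul]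
  rw [← Finset.prod_mul_distrib]
  exact Finset.prod_congr rfl fun j _ => by rw [h j]; simp

section OStr
variable {n : ℕ} (G : SimpleGraph (Fin n)) [DecidableRel G.Adj]

lemma Pauli.comm_of {p q : Pauli} (h : p = .I ∨ q = .I ∨ p = q) :
    p.mat * q.mat = q.mat * p.mat := by
  rcases h with h|h|h <;> subst h <;> simp [Pauli.mat]

lemma oStr_inj : Function.Injective (oStr G) := by
  intro i j h
  by_contra hne
  have hh := congrFun h i
  simp only [oStr, if_pos rfl, if_neg hne] at hh
  split_ifs at hh <;> exact Pauli.noConfusion hh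

lemma oStr_comm {i j : Fin n} (hij : G.Adj i j) :
    Pmat (oStr G i) * Pmat (oStr G j) = Pmat (oStr G j) * Pmat (oStr G i) := by
  have hne : i ≠ j := hij.ne
  apply Pmat_comm_of
  intro k
  apply Pauli.comm_of
  simp only [oStr]
  rcases eq_or_ne k i with hki|hki
  · rw [if_pos hki, if_neg (show ¬ k = j by rw [hki]; exact hne),
      if_neg (by rw [hki]; simp [hij.symm])]
    exact Or.inr (Or.inl rfl)
  · rcases eq_or_ne k j with hkj|hkj
    · rw [if_neg hki, if_neg (by rw [hkj]; simp [hij])]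
      exact Or.inl rfl
    · rw [if_neg hki, if_neg hkj]
      split_ifs <;> simp

lemma Pauli.X_mul_Z :
    Pauli.X.mat * Pauli.Z.mat = (-1 : ℂ) • (Pauli.Z.mat * Pauli.X.mat) := by
  ext a b
  fin_cases a <;> fin_cases b <;>
    simp [Pauli.mat, Matrix.mul_apply, Fin.sum_univ_two]

lemma oStr_anticomm {i j : Fin n} (hij : i < j) (hnadj : ¬ G.Adj i j) :
    Pmat (oStr G i) * Pmat (oStr G j) = (-1 : ℂ) • (Pmat (oStr G j) * Pmat (oStr G i)) := by
  have hne : i ≠ j := hij.ne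
  have key := Pmat_smul_of (oStr G i) (oStr G j)
      (fun k => if k = j then (-1 : ℂ) else 1) ?_
  · rw [key, Finset.prod_ite_eq' Finset.univ j (fun _ => (-1 : ℂ))]
    simp
  · intro k
    rcases eq_or_ne k j with hkj|hkj
    · rw [if_pos hkj]
      have h1 : oStr G i k = Pauli.X := by
        rw [hkj]
        simp only [oStr, if_neg hne.symm]
        rw [if_pos ⟨hij, hnadj⟩]
      have h2 : oStr G j k = Pauli.Z := by rw [hkj]; simp [oStr]
      rw [h1, h2]
      exact Pauli.X_mul_Z
    · rw [if_neg hkj, one_smul]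
      apply Pauli.comm_of
      simp only [oStr]
      rcases eq_or_ne k i with hki|hki
      · rw [if_pos hki, if_neg hkj, if_neg (by rw [hki]; simp [asymm hij])]
        exact Or.inr (Or.inl rfl)
      · rw [if_neg hki, if_neg hkj]
        split_ifs <;> simp
end OStr

section Main
variable {n : ℕ} (G : SimpleGraph (Fin n)) [DecidableRel G.Adj]

lemma part1 (S : Finset (Fin n)) :
    (∀ i ∈ S, ∀ j ∈ S,
        Pmat (oStr G i) * Pmat (oStr G j) = Pmat (oStr G j) * Pmat (oStr G i)) ↔
      G.IsClique (S : Set (Fin n)) := by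
  constructor
  · intro h a ha b hb hne
    have key : ∀ a b : Fin n, a ∈ S → b ∈ S → a < b → G.Adj a b := by
      intro a b ha hb hab
      by_contra hn
      have h1 := oStr_anticomm G hab hn
      rw [h a ha b hb, neg_one_smul] at h1
      have h2 : Pmat (oStr G b) * Pmat (oStr G a)
          + Pmat (oStr G b) * Pmat (oStr G a) = 0 :=
        add_eq_zero_iff_eq_neg.mpr h1
      have h3 : (2 : ℂ) • (Pmat (oStr G b) * Pmat (oStr G a)) = 0 := by
        rw [two_smul]; exact h2
      have h0 : Pmat (oStr G b) * Pmat (oStr G a) = 0 :=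
        (smul_eq_zero.mp h3).resolve_left two_ne_zero
      exact Pmat_mul_ne_zero _ _ h0
    rcases lt_or_gt_of_ne hne with hab|hab
    · exact key a b (Finset.mem_coe.mp ha) (Finset.mem_coe.mp hb) hab
    · exact (key b a (Finset.mem_coe.mp hb) (Finset.mem_coe.mp ha) hab).symm
  · intro hc i hi j hj
    rcases eq_or_ne i j with rfl|hne
    · rfl
    · exact oStr_comm G (hc (Finset.mem_coe.mpr hi) (Finset.mem_coe.mpr hj) hne)

lemma part2 :
    {k | ∃ P : Finset (Finset (PauliString n)), P.card = k ∧
      (∀ S ∈ P, S.Nonempty) ∧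
      (P : Set (Finset (PauliString n))).PairwiseDisjoint id ∧
      P.sup id = Finset.univ.image (oStr G) ∧
      ∀ S ∈ P, ∀ A ∈ S, ∀ B ∈ S, Pmat A * Pmat B = Pmat B * Pmat A} =
    {k | ∃ P : Finset (Finset (Fin n)), P.card = k ∧
      (∀ S ∈ P, S.Nonempty) ∧
      (P : Set (Finset (Fin n))).PairwiseDisjoint id ∧
      P.sup id = Finset.univ ∧
      ∀ S ∈ P, G.IsClique (S : Set (Fin n))} := by
  have hinj := oStr_inj G
  ext k
  simp only [Set.mem_setOf_eq]
  constructor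
  · rintro ⟨P, hcard, hne, hdisj, hsup, hcomm⟩
    set f : Finset (PauliString n) → Finset (Fin n) :=
      fun S => Finset.univ.filter (fun i => oStr G i ∈ S) with hf
    have hsub : ∀ S ∈ P, S ⊆ Finset.univ.image (oStr G) := by
      intro S hS
      rw [← hsup]
      exact Finset.le_sup (f := id) hS
    have himg : ∀ S ∈ P, (f S).image (oStr G) = S := by
      intro S hS
      ext s
      simp only [Finset.mem_image, hf, Finset.mem_filter, Finset.mem_univ, true_and]
      constructor
      · rintro ⟨i, hi, rfl⟩; exact hi
      · intro hs
        obtain ⟨i, -, rfl⟩ := Finset.mem_image.mp (hsub S hS hs)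
        exact ⟨i, hs, rfl⟩
    have hfinj : ∀ S₁ ∈ P, ∀ S₂ ∈ P, f S₁ = f S₂ → S₁ = S₂ := by
      intro S₁ h₁ S₂ h₂ h
      rw [← himg S₁ h₁, ← himg S₂ h₂, h]
    refine ⟨P.image f, ?_, ?_, ?_, ?_, ?_⟩
    · rw [Finset.card_image_of_injOn hfinj, hcard]
    · intro S' hS'
      obtain ⟨S, hS, rfl⟩ := Finset.mem_image.mp hS'
      obtain ⟨s, hs⟩ := hne S hS
      obtain ⟨i, -, rfl⟩ := Finset.mem_image.mp (hsub S hS hs)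
      exact ⟨i, by simp [hf, hs]⟩
    · rintro a ha b hb hab
      obtain ⟨S₁, h₁, rfl⟩ := Finset.mem_image.mp (Finset.mem_coe.mp ha)
      obtain ⟨S₂, h₂, rfl⟩ := Finset.mem_image.mp (Finset.mem_coe.mp hb)
      have hS12 : S₁ ≠ S₂ := fun h => hab (by rw [h])
      simp only [id_eq, Finset.disjoint_left]
      intro i hi₁ hi₂
      simp only [hf, Finset.mem_filter, Finset.mem_univ, true_and] at hi₁ hi₂
      exact (Finset.disjoint_left.mp
        (hdisj (Finset.mem_coe.mpr h₁) (Finset.mem_coe.mpr h₂) hS12)) hi₁ hi₂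
    · apply Finset.eq_univ_iff_forall.mpr
      intro i
      have : oStr G i ∈ P.sup id := by
        rw [hsup]; exact Finset.mem_image_of_mem _ (Finset.mem_univ i)
      obtain ⟨S, hS, hiS⟩ := Finset.mem_sup.mp this
      refine Finset.mem_sup.mpr ⟨f S, Finset.mem_image_of_mem f hS, ?_⟩
      simp only [id_eq] at hiS ⊢
      simp [hf, hiS]
    · intro S' hS'
      obtain ⟨S, hS, rfl⟩ := Finset.mem_image.mp hS'
      refine (part1 G (f S)).mp ?_
      intro i hi j hj
      simp only [hf, Finset.mem_filter, Finset.mem_univ, true_and] at hi hj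
      exact hcomm S hS _ hi _ hj
  · rintro ⟨Q, hcard, hne, hdisj, hsup, hclique⟩
    set g : Finset (Fin n) → Finset (PauliString n) :=
      fun C => C.image (oStr G) with hg
    have hginj : Function.Injective g := Finset.image_injective hinj
    refine ⟨Q.image g, ?_, ?_, ?_, ?_, ?_⟩
    · rw [Finset.card_image_of_injective _ hginj, hcard]
    · intro S hS
      obtain ⟨C, hC, rfl⟩ := Finset.mem_image.mp hS
      exact (hne C hC).image _
    · rintro a ha b hb hab
      obtain ⟨C₁, h₁, rfl⟩ := Finset.mem_image.mp (Finset.mem_coe.mp ha)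
      obtain ⟨C₂, h₂, rfl⟩ := Finset.mem_image.mp (Finset.mem_coe.mp hb)
      have hC12 : C₁ ≠ C₂ := fun h => hab (by rw [h])
      simp only [id_eq, hg]
      exact (Finset.disjoint_image hinj).mpr
        (hdisj (Finset.mem_coe.mpr h₁) (Finset.mem_coe.mpr h₂) hC12)
    · ext s
      simp only [Finset.mem_sup, Finset.mem_image, id_eq]
      constructor
      · rintro ⟨S, ⟨C, hC, rfl⟩, hs⟩
        obtain ⟨i, -, rfl⟩ := Finset.mem_image.mp hs
        exact ⟨i, Finset.mem_univ i, rfl⟩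
      · rintro ⟨i, -, rfl⟩
        have : i ∈ Q.sup id := by rw [hsup]; exact Finset.mem_univ i
        obtain ⟨C, hC, hiC⟩ := Finset.mem_sup.mp this
        simp only [id_eq] at hiC
        exact ⟨g C, ⟨C, hC, rfl⟩, Finset.mem_image_of_mem _ hiC⟩
    · intro S hS A hA B hB
      obtain ⟨C, hC, rfl⟩ := Finset.mem_image.mp hS
      obtain ⟨i, hi, rfl⟩ := Finset.mem_image.mp hA
      obtain ⟨j, hj, rfl⟩ := Finset.mem_image.mp hB
      exact (part1 G C).mpr (hclique C hC) i hi j hj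

end Main

/-- In the reduction from MIN-CLIQUE-COVER: a subset `S` of vertices indexes a pairwise
commuting family `{o_i : i ∈ S}` iff it is a clique of `G`; consequently the minimum
number of pairwise-commuting parts needed to partition `{o_1, …, o_n}` equals the clique
cover number of `G`. -/
theorem oStr_clique_iff_and_min_partition_eq_clique_cover {n : ℕ}
    (G : SimpleGraph (Fin n)) [DecidableRel G.Adj] :
    (∀ S : Finset (Fin n),
      ((∀ i ∈ S, ∀ j ∈ S,
          Pmat (oStr G i) * Pmat (oStr G j) = Pmat (oStr G j) * Pmat (oStr G i)) ↔
        G.IsClique (S : Set (Fin n)))) ∧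
    minCommParts (Finset.univ.image (oStr G)) = cliqueCoverNum G := by
  refine ⟨part1 G, ?_⟩
  unfold minCommParts cliqueCoverNum
  exact congrArg sInf (part2 G)
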